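/- (Lemma 4.6, Brezis–Lieb type result for the coupling term.) Let N ≥ 3 be an integer, let 0 ≤ s₂ < 2, and let α > 1, β > 1 with α + β = 2^*(s₂). Let (u_n) and (v_n) be sequences of measurable functions ℝ^N → ℝ with sup_n ∫_{ℝ^N} ( |u_n(x)|^{2^*(s₂)} + |v_n(x)|^{2^*(s₂)} ) ‖x‖^{−s₂} dx < ∞, and suppose u_n → u and v_n → v almost everywhere on ℝ^N. Then ∫_{ℝ^N} ( |u_n(x)|^{α} |v_n(x)|^{β} − |u_n(x) − u(x)|^{α} |v_n(x) − v(x)|^{β} ) ‖x‖^{−s₂} dx → ∫_{ℝ^N} |u(x)|^{α} |v(x)|^{β} ‖x‖^{−s₂} dx as n → ∞. -/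

import Mathlib

open MeasureTheory Filter

namespace BL16


lemma young_simple {q r : ℝ} (hq : 0 < q) (hr : 0 < r) {a b : ℝ}
    (ha : 0 ≤ a) (hb : 0 ≤ b) : a ^ q * b ^ r ≤ a ^ (q + r) + b ^ (q + r) := by
  rcases le_total a b with h | h
  · calc a ^ q * b ^ r ≤ b ^ q * b ^ r := by gcongr
      _ = b ^ (q + r) := (Real.rpow_add_of_nonneg hb hq.le hr.le).symm
      _ ≤ _ := le_add_of_nonneg_left (Real.rpow_nonneg ha _)
  · calc a ^ q * b ^ r ≤ a ^ q * a ^ r := by gcongr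
      _ = a ^ (q + r) := (Real.rpow_add_of_nonneg ha hq.le hr.le).symm
      _ ≤ _ := le_add_of_nonneg_right (Real.rpow_nonneg hb _)

lemma young_eps {q r : ℝ} (hq : 0 < q) (hr : 0 < r) {ε : ℝ} (hε : 0 < ε) :
    ∃ C : ℝ, 0 ≤ C ∧ ∀ a b : ℝ, 0 ≤ a → 0 ≤ b →
      a ^ q * b ^ r ≤ ε * a ^ (q + r) + C * b ^ (q + r) := by
  set l : ℝ := ε ^ (1 / (q + r)) with hl
  have hqr : 0 < q + r := by linarith
  have hlpos : 0 < l := Real.rpow_pos_of_pos hε _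
  set m : ℝ := l ^ (-(q / r)) with hm
  have hmpos : 0 < m := Real.rpow_pos_of_pos hlpos _
  refine ⟨m ^ (q + r), (Real.rpow_nonneg hmpos.le _), fun a b ha hb => ?_⟩
  have key : a ^ q * b ^ r = (l * a) ^ q * (m * b) ^ r := by
    rw [Real.mul_rpow hlpos.le ha, Real.mul_rpow hmpos.le hb, hm,
      ← Real.rpow_mul hlpos.le]
    have : -(q / r) * r = -q := by field_simp
    rw [this]
    have : l ^ q * a ^ q * (l ^ (-q) * b ^ r) = (l ^ q * l ^ (-q)) * (a ^ q * b ^ r) := by ring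
    rw [this, ← Real.rpow_add hlpos]
    simp
  have hle := young_simple hq hr (mul_nonneg hlpos.le ha) (mul_nonneg hmpos.le hb)
  rw [key]
  have h1 : (l * a) ^ (q + r) = ε * a ^ (q + r) := by
    rw [Real.mul_rpow hlpos.le ha, hl, ← Real.rpow_mul hε.le]
    rw [one_div_mul_cancel hqr.ne', Real.rpow_one]
  have h2 : (m * b) ^ (q + r) = m ^ (q + r) * b ^ (q + r) := Real.mul_rpow hmpos.le hb
  rw [h1, h2] at hle
  exact hle

lemma rpow_sub_rpow_le {α : ℝ} (hα : 1 < α) {x y : ℝ} (hy : 0 ≤ y) (hxy : y ≤ x) :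
    x ^ α - y ^ α ≤ α * x ^ (α - 1) * (x - y) := by
  rcases eq_or_lt_of_le hxy with rfl | h
  · simp
  · obtain ⟨c, hc, hderiv⟩ := exists_hasDerivAt_eq_slope (fun t => t ^ α)
      (fun t => α * t ^ (α - 1)) h
      (fun t _ => (Real.continuousAt_rpow_const t α (Or.inr (by linarith))).continuousWithinAt)
      (fun t _ => Real.hasDerivAt_rpow_const (Or.inr hα.le))
    have hc0 : 0 ≤ c := le_of_lt (lt_of_le_of_lt hy hc.1)
    have hne : x - y ≠ 0 := sub_ne_zero.2 (ne_of_gt h)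
    have heq : x ^ α - y ^ α = α * c ^ (α - 1) * (x - y) :=
      ((div_eq_iff hne).1 hderiv.symm)
    rw [heq]
    have hcx : c ^ (α - 1) ≤ x ^ (α - 1) := Real.rpow_le_rpow hc0 hc.2.le (by linarith)
    have hx0 : (0:ℝ) ≤ x - y := by linarith
    exact mul_le_mul_of_nonneg_right
      (mul_le_mul_of_nonneg_left hcx (by linarith)) hx0

lemma two_rpow {γ : ℝ} (hγ : 0 ≤ γ) {s t : ℝ} (hs : 0 ≤ s) (ht : 0 ≤ t) :
    (s + t) ^ γ ≤ 2 ^ γ * (s ^ γ + t ^ γ) := by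
  have h1 : s + t ≤ 2 * max s t := by
    rcases le_total s t with h | h
    · simp [max_eq_right h]; linarith
    · simp [max_eq_left h]; linarith
  calc (s + t) ^ γ ≤ (2 * max s t) ^ γ :=
        Real.rpow_le_rpow (by linarith) h1 hγ
    _ = 2 ^ γ * (max s t) ^ γ := Real.mul_rpow (by norm_num) (le_max_iff.2 (Or.inl hs))
    _ ≤ 2 ^ γ * (s ^ γ + t ^ γ) := by
        gcongr 2 ^ γ * ?_
        rcases le_total s t with h | h
        · rw [max_eq_right h]; exact le_add_of_nonneg_left (Real.rpow_nonneg hs _)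
        · rw [max_eq_left h]; exact le_add_of_nonneg_right (Real.rpow_nonneg ht _)

/-- Brezis–Lieb elementary inequality for `| |a|^α - |b|^α |`. -/
lemma bl_basic {α : ℝ} (hα : 1 < α) {ε : ℝ} (hε : 0 < ε) :
    ∃ C : ℝ, 0 ≤ C ∧ ∀ a b : ℝ,
      |(|a| ^ α - |b| ^ α)| ≤ ε * |b| ^ α + C * |a - b| ^ α := by
  have hα0 : (0:ℝ) < α := by linarith
  have hα1 : (0:ℝ) < α - 1 := by linarith
  have h2 : (0:ℝ) < α * 2 ^ (α - 1) := by positivity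
  obtain ⟨C', hC'0, hC'⟩ := young_eps hα1 one_pos (ε := ε / (α * 2 ^ (α - 1)))
    (div_pos hε h2)
  have hsum : α - 1 + 1 = α := by ring
  refine ⟨α * 2 ^ (α - 1) * (C' + 1), by positivity, fun a b => ?_⟩
  set d : ℝ := |a - b| with hd
  have hd0 : 0 ≤ d := abs_nonneg _
  have ha0 : 0 ≤ |a| := abs_nonneg _
  have hb0 : 0 ≤ |b| := abs_nonneg _
  -- step 1: |(|a|^α - |b|^α)| ≤ α * (max) ^ (α-1) * d
  have step1 : |(|a| ^ α - |b| ^ α)| ≤ α * (|b| + d) ^ (α - 1) * d := by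
    rcases le_total |a| |b| with h | h
    · have := rpow_sub_rpow_le hα ha0 h
      have habs : |b| - |a| ≤ d := by
        rw [hd, ← abs_neg (a - b)]
        simpa using abs_sub_abs_le_abs_sub b a
      have hm : |b| ≤ |b| + d := by linarith
      have hmono : |b| ^ (α - 1) ≤ (|b| + d) ^ (α - 1) :=
        Real.rpow_le_rpow hb0 hm hα1.le
      have habs2 : |(|a| ^ α - |b| ^ α)| = |b| ^ α - |a| ^ α := by
        rw [abs_sub_comm]
        exact abs_of_nonneg (by linarith [Real.rpow_le_rpow ha0 h hα0.le])
      rw [habs2]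
      calc |b| ^ α - |a| ^ α ≤ α * |b| ^ (α - 1) * (|b| - |a|) := this
        _ ≤ α * (|b| + d) ^ (α - 1) * d := by
            apply mul_le_mul
            · exact mul_le_mul_of_nonneg_left hmono hα0.le
            · exact habs
            · linarith
            · positivity
    · have := rpow_sub_rpow_le hα hb0 h
      have habs : |a| - |b| ≤ d := abs_sub_abs_le_abs_sub a b
      have hm : |a| ≤ |b| + d := by linarith
      have hmono : |a| ^ (α - 1) ≤ (|b| + d) ^ (α - 1) :=
        Real.rpow_le_rpow ha0 hm hα1.le
      have habs2 : |(|a| ^ α - |b| ^ α)| = |a| ^ α - |b| ^ α :=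
        abs_of_nonneg (by linarith [Real.rpow_le_rpow hb0 h hα0.le])
      rw [habs2]
      calc |a| ^ α - |b| ^ α ≤ α * |a| ^ (α - 1) * (|a| - |b|) := this
        _ ≤ α * (|b| + d) ^ (α - 1) * d := by
            apply mul_le_mul
            · exact mul_le_mul_of_nonneg_left hmono hα0.le
            · exact habs
            · linarith
            · positivity
  -- step 2
  have step2 : (|b| + d) ^ (α - 1) ≤ 2 ^ (α - 1) * (|b| ^ (α - 1) + d ^ (α - 1)) :=
    two_rpow hα1.le hb0 hd0
  have hdd : d ^ (α - 1) * d = d ^ α := by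
    nth_rewrite 2 [← Real.rpow_one d]
    rw [← Real.rpow_add_of_nonneg hd0 hα1.le zero_le_one, hsum]
  have key := hC' |b| d hb0 hd0
  rw [Real.rpow_one, hsum] at key
  -- combine
  calc |(|a| ^ α - |b| ^ α)| ≤ α * (|b| + d) ^ (α - 1) * d := step1
    _ ≤ α * (2 ^ (α - 1) * (|b| ^ (α - 1) + d ^ (α - 1))) * d := by
        apply mul_le_mul_of_nonneg_right _ hd0
        exact mul_le_mul_of_nonneg_left step2 hα0.le
    _ = α * 2 ^ (α - 1) * (|b| ^ (α - 1) * d) + α * 2 ^ (α - 1) * (d ^ (α-1) * d) := by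
        ring
    _ ≤ α * 2 ^ (α - 1) * (ε / (α * 2 ^ (α - 1)) * |b| ^ α + C' * d ^ α)
        + α * 2 ^ (α - 1) * d ^ α := by
        rw [hdd]
        gcongr
    _ ≤ ε * |b| ^ α + α * 2 ^ (α - 1) * (C' + 1) * d ^ α := by
        have : α * 2 ^ (α - 1) * (ε / (α * 2 ^ (α - 1)) * |b| ^ α) = ε * |b| ^ α := by
          field_simp
        nlinarith [Real.rpow_nonneg hd0 α, Real.rpow_nonneg hb0 α]


lemma key_ineq {α β : ℝ} (hα : 1 < α) (hβ : 1 < β) {ε : ℝ} (hε : 0 < ε) :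
    ∃ C : ℝ, 0 ≤ C ∧ ∀ a b c d : ℝ,
      |(|a| ^ α * |c| ^ β - |a - b| ^ α * |c - d| ^ β - |b| ^ α * |d| ^ β)| ≤
        ε * (|a - b| ^ (α + β) + |c - d| ^ (α + β))
          + C * (|b| ^ (α + β) + |d| ^ (α + β)) := by
  have hα0 : (0:ℝ) < α := by linarith
  have hβ0 : (0:ℝ) < β := by linarith
  have h2β : (0:ℝ) < 2 ^ β := Real.rpow_pos_of_pos (by norm_num) _
  set e3 : ℝ := ε / 4 with he3def
  have he3 : 0 < e3 := by positivity
  obtain ⟨C₃, hC₃0, hC₃⟩ := bl_basic hβ he3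
  set e4 : ℝ := ε / (4 * (C₃ + 1)) with he4def
  have he4 : 0 < e4 := by positivity
  obtain ⟨C₄, hC₄0, hC₄⟩ := young_eps hα0 hβ0 he4
  set e1 : ℝ := ε / (8 * 2 ^ β + 1) with he1def
  have he1 : 0 < e1 := by positivity
  obtain ⟨C₁, hC₁0, hC₁⟩ := bl_basic hα he1
  set e2 : ℝ := ε / (4 * 2 ^ β * (C₁ + 1)) with he2def
  have he2 : 0 < e2 := by positivity
  obtain ⟨C₂, hC₂0, hC₂⟩ := young_eps hβ0 hα0 he2
  -- coefficient bounds
  have hS1 : e1 * 2 ^ β * 2 + e3 + C₃ * e4 ≤ ε := by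
    have h1 : e1 * 2 ^ β * 2 ≤ ε / 4 := by
      rw [he1def, div_mul_eq_mul_div, div_mul_eq_mul_div, div_le_div_iff₀ (by positivity) (by norm_num)]
      nlinarith
    have h2 : C₃ * e4 ≤ ε / 4 := by
      rw [he4def, mul_div_assoc']
      rw [div_le_div_iff₀ (by positivity) (by norm_num)]
      nlinarith
    linarith
  have hS2 : e1 * 2 ^ β + C₁ * 2 ^ β * e2 + e3 ≤ ε := by
    have h1 : e1 * 2 ^ β ≤ ε / 4 := by
      rw [he1def, div_mul_eq_mul_div, div_le_div_iff₀ (by positivity) (by norm_num)]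
      nlinarith
    have h2 : C₁ * 2 ^ β * e2 ≤ ε / 4 := by
      rw [he2def, mul_div_assoc']
      rw [div_le_div_iff₀ (by positivity) (by norm_num)]
      nlinarith
    linarith
  set C : ℝ := e1 * 2 ^ β + C₁ * 2 ^ β * (C₂ + 2) + C₃ * C₄ + 1 with hCdef
  have hC0 : 0 ≤ C := by positivity
  refine ⟨C, hC0, fun a b c d => ?_⟩
  set d₁ : ℝ := |a - b| with hd₁
  set d₂ : ℝ := |c - d| with hd₂
  have hd₁0 : 0 ≤ d₁ := abs_nonneg _
  have hd₂0 : 0 ≤ d₂ := abs_nonneg _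
  have hB0 : 0 ≤ |b| := abs_nonneg _
  have hD0 : 0 ≤ |d| := abs_nonneg _
  have hA0 : 0 ≤ |a| := abs_nonneg _
  have hCc0 : 0 ≤ |c| := abs_nonneg _
  set P1 : ℝ := d₁ ^ (α + β) with hP1
  set P2 : ℝ := d₂ ^ (α + β) with hP2
  set Bp : ℝ := |b| ^ (α + β) with hBp
  set Dp : ℝ := |d| ^ (α + β) with hDp
  have hP1n : 0 ≤ P1 := Real.rpow_nonneg hd₁0 _
  have hP2n : 0 ≤ P2 := Real.rpow_nonneg hd₂0 _
  have hBpn : 0 ≤ Bp := Real.rpow_nonneg hB0 _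
  have hDpn : 0 ≤ Dp := Real.rpow_nonneg hD0 _
  -- triangle decomposition
  have habs : |(|a| ^ α * |c| ^ β - d₁ ^ α * d₂ ^ β - |b| ^ α * |d| ^ β)| ≤
      |(|a| ^ α - d₁ ^ α)| * |c| ^ β + d₁ ^ α * |(|c| ^ β - d₂ ^ β)|
        + |b| ^ α * |d| ^ β := by
    have hrw : |a| ^ α * |c| ^ β - d₁ ^ α * d₂ ^ β - |b| ^ α * |d| ^ β =
        ((|a| ^ α - d₁ ^ α) * |c| ^ β) + (d₁ ^ α * (|c| ^ β - d₂ ^ β))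
          - |b| ^ α * |d| ^ β := by ring
    rw [hrw]
    calc |((|a| ^ α - d₁ ^ α) * |c| ^ β) + (d₁ ^ α * (|c| ^ β - d₂ ^ β))
          - |b| ^ α * |d| ^ β|
        ≤ |((|a| ^ α - d₁ ^ α) * |c| ^ β) + (d₁ ^ α * (|c| ^ β - d₂ ^ β))|
          + |(|b| ^ α * |d| ^ β)| := abs_sub _ _
      _ ≤ |((|a| ^ α - d₁ ^ α) * |c| ^ β)| + |(d₁ ^ α * (|c| ^ β - d₂ ^ β))|
          + |(|b| ^ α * |d| ^ β)| := by
            have := abs_add_le ((|a| ^ α - d₁ ^ α) * |c| ^ β)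
              (d₁ ^ α * (|c| ^ β - d₂ ^ β))
            linarith
      _ = |(|a| ^ α - d₁ ^ α)| * |c| ^ β + d₁ ^ α * |(|c| ^ β - d₂ ^ β)|
          + |b| ^ α * |d| ^ β := by
            rw [abs_mul, abs_mul, abs_mul,
              abs_of_nonneg (Real.rpow_nonneg hCc0 β),
              abs_of_nonneg (Real.rpow_nonneg hd₁0 α),
              abs_of_nonneg (Real.rpow_nonneg hB0 α),
              abs_of_nonneg (Real.rpow_nonneg hD0 β)]
  -- base bounds
  have hX : |(|a| ^ α - d₁ ^ α)| ≤ e1 * d₁ ^ α + C₁ * |b| ^ α := by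
    have := hC₁ a (a - b)
    simpa [hd₁, show a - (a - b) = b by ring] using this
  have hW : |c| ^ β ≤ 2 ^ β * (d₂ ^ β + |d| ^ β) := by
    have h1 : |c| ≤ d₂ + |d| := by
      rw [hd₂]
      calc |c| = |(c - d) + d| := by ring_nf
        _ ≤ |c - d| + |d| := abs_add_le _ _
    calc |c| ^ β ≤ (d₂ + |d|) ^ β := Real.rpow_le_rpow hCc0 h1 hβ0.le
      _ ≤ 2 ^ β * (d₂ ^ β + |d| ^ β) := two_rpow hβ0.le hd₂0 hD0
  have hY : |(|c| ^ β - d₂ ^ β)| ≤ e3 * d₂ ^ β + C₃ * |d| ^ β := by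
    have := hC₃ c (c - d)
    simpa [hd₂, show c - (c - d) = d by ring] using this
  -- products
  have hXW : |(|a| ^ α - d₁ ^ α)| * |c| ^ β ≤
      (e1 * d₁ ^ α + C₁ * |b| ^ α) * (2 ^ β * (d₂ ^ β + |d| ^ β)) :=
    mul_le_mul hX hW (Real.rpow_nonneg hCc0 β) (by positivity)
  have hT2 : d₁ ^ α * |(|c| ^ β - d₂ ^ β)| ≤
      d₁ ^ α * (e3 * d₂ ^ β + C₃ * |d| ^ β) :=
    mul_le_mul_of_nonneg_left hY (Real.rpow_nonneg hd₁0 α)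
  -- young bounds
  have y1 : d₁ ^ α * d₂ ^ β ≤ P1 + P2 := young_simple hα0 hβ0 hd₁0 hd₂0
  have y2 : d₁ ^ α * |d| ^ β ≤ P1 + Dp := young_simple hα0 hβ0 hd₁0 hD0
  have y2' : d₁ ^ α * |d| ^ β ≤ e4 * P1 + C₄ * Dp := hC₄ d₁ |d| hd₁0 hD0
  have y3 : |b| ^ α * d₂ ^ β ≤ e2 * P2 + C₂ * Bp := by
    have := hC₂ d₂ |b| hd₂0 hB0
    rw [add_comm β α] at this
    linarith
  have y4 : |b| ^ α * |d| ^ β ≤ Bp + Dp := young_simple hα0 hβ0 hB0 hD0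
  -- combine T1
  have hT1 : |(|a| ^ α - d₁ ^ α)| * |c| ^ β ≤
      e1 * 2 ^ β * ((P1 + P2) + (P1 + Dp))
        + C₁ * 2 ^ β * ((e2 * P2 + C₂ * Bp) + (Bp + Dp)) := by
    have expand : (e1 * d₁ ^ α + C₁ * |b| ^ α) * (2 ^ β * (d₂ ^ β + |d| ^ β)) =
        e1 * 2 ^ β * (d₁ ^ α * d₂ ^ β) + e1 * 2 ^ β * (d₁ ^ α * |d| ^ β)
          + C₁ * 2 ^ β * (|b| ^ α * d₂ ^ β) + C₁ * 2 ^ β * (|b| ^ α * |d| ^ β) := by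
      ring
    rw [expand] at hXW
    have c1 : 0 ≤ e1 * 2 ^ β := by positivity
    have c2 : 0 ≤ C₁ * 2 ^ β := by positivity
    have m1 := mul_le_mul_of_nonneg_left y1 c1
    have m2 := mul_le_mul_of_nonneg_left y2 c1
    have m3 := mul_le_mul_of_nonneg_left y3 c2
    have m4 := mul_le_mul_of_nonneg_left y4 c2
    linarith
  -- combine T2
  have hT2' : d₁ ^ α * |(|c| ^ β - d₂ ^ β)| ≤
      e3 * (P1 + P2) + C₃ * (e4 * P1 + C₄ * Dp) := by
    have expand : d₁ ^ α * (e3 * d₂ ^ β + C₃ * |d| ^ β) =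
        e3 * (d₁ ^ α * d₂ ^ β) + C₃ * (d₁ ^ α * |d| ^ β) := by ring
    rw [expand] at hT2
    have m1 := mul_le_mul_of_nonneg_left y1 he3.le
    have m2 := mul_le_mul_of_nonneg_left y2' hC₃0
    linarith
  -- total
  have total : |(|a| ^ α * |c| ^ β - d₁ ^ α * d₂ ^ β - |b| ^ α * |d| ^ β)| ≤
      (e1 * 2 ^ β * 2 + e3 + C₃ * e4) * P1 + (e1 * 2 ^ β + C₁ * 2 ^ β * e2 + e3) * P2
        + (C₁ * 2 ^ β * (C₂ + 1) + 1) * Bp + (e1 * 2 ^ β + C₁ * 2 ^ β + C₃ * C₄ + 1) * Dp := by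
    linarith [habs, hT1, hT2', y4]
  have fin1 : (e1 * 2 ^ β * 2 + e3 + C₃ * e4) * P1 ≤ ε * P1 :=
    mul_le_mul_of_nonneg_right hS1 hP1n
  have fin2 : (e1 * 2 ^ β + C₁ * 2 ^ β * e2 + e3) * P2 ≤ ε * P2 :=
    mul_le_mul_of_nonneg_right hS2 hP2n
  have fin3 : (C₁ * 2 ^ β * (C₂ + 1) + 1) * Bp ≤ C * Bp := by
    apply mul_le_mul_of_nonneg_right _ hBpn
    have hre : (e1 * 2 ^ β + C₁ * 2 ^ β * (C₂ + 2) + C₃ * C₄ + 1)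
        - (C₁ * 2 ^ β * (C₂ + 1) + 1) = e1 * 2 ^ β + C₁ * 2 ^ β + C₃ * C₄ := by ring
    have n1 := mul_nonneg he1.le h2β.le
    have n2 := mul_nonneg hC₃0 hC₄0
    have n3 := mul_nonneg hC₁0 h2β.le
    rw [hCdef]
    linarith
  have fin4 : (e1 * 2 ^ β + C₁ * 2 ^ β + C₃ * C₄ + 1) * Dp ≤ C * Dp := by
    apply mul_le_mul_of_nonneg_right _ hDpn
    have hre : (e1 * 2 ^ β + C₁ * 2 ^ β * (C₂ + 2) + C₃ * C₄ + 1)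
        - (e1 * 2 ^ β + C₁ * 2 ^ β + C₃ * C₄ + 1) = C₁ * 2 ^ β * (C₂ + 1) := by ring
    have n1 := mul_nonneg (mul_nonneg hC₁0 h2β.le) (by linarith : (0:ℝ) ≤ C₂ + 1)
    rw [hCdef]
    linarith
  calc |(|a| ^ α * |c| ^ β - d₁ ^ α * d₂ ^ β - |b| ^ α * |d| ^ β)| ≤ _ := total
    _ ≤ ε * P1 + ε * P2 + C * Bp + C * Dp := by linarith
    _ = ε * (P1 + P2) + C * (Bp + Dp) := by ring


theorem main_aux {X : Type*} [MeasurableSpace X] (μ : Measure X)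
    (α β : ℝ) (hα : 1 < α) (hβ : 1 < β)
    (w : X → ℝ) (hw : Measurable w) (hw0 : ∀ x, 0 ≤ w x)
    (u v : ℕ → X → ℝ) (hu : ∀ n, Measurable (u n)) (hv : ∀ n, Measurable (v n))
    (u₀ v₀ : X → ℝ) (hu₀ : Measurable u₀) (hv₀ : Measurable v₀)
    (M : ENNReal) (hM : M < ⊤)
    (hbdd : ∀ n, ∫⁻ x, ENNReal.ofReal
        ((|u n x| ^ (α + β) + |v n x| ^ (α + β)) * w x) ∂μ ≤ M)
    (haeu : ∀ᵐ x ∂μ, Tendsto (fun n => u n x) atTop (nhds (u₀ x)))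
    (haev : ∀ᵐ x ∂μ, Tendsto (fun n => v n x) atTop (nhds (v₀ x))) :
    Tendsto (fun n => ∫ x,
        (|u n x| ^ α * |v n x| ^ β - |u n x - u₀ x| ^ α * |v n x - v₀ x| ^ β) * w x ∂μ)
      atTop (nhds (∫ x, |u₀ x| ^ α * |v₀ x| ^ β * w x ∂μ)) := by
  have hα0 : (0:ℝ) < α := by linarith
  have hβ0 : (0:ℝ) < β := by linarith
  have hp0 : (0:ℝ) < α + β := by linarith
  -- abbreviations
  set Ψ : X → ℝ := fun x => (|u₀ x| ^ (α + β) + |v₀ x| ^ (α + β)) * w x with hΨdef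
  set Φ : ℕ → X → ℝ := fun n x =>
    (|u n x - u₀ x| ^ (α + β) + |v n x - v₀ x| ^ (α + β)) * w x with hΦdef
  set F : ℕ → X → ℝ := fun n x => |u n x| ^ α * |v n x| ^ β * w x with hFdef
  set G : ℕ → X → ℝ := fun n x =>
    |u n x - u₀ x| ^ α * |v n x - v₀ x| ^ β * w x with hGdef
  set H : X → ℝ := fun x => |u₀ x| ^ α * |v₀ x| ^ β * w x with hHdef
  set g : ℕ → X → ℝ := fun n x => F n x - G n x - H x with hgdef
  -- nonnegativity
  have hΨ0 : ∀ x, 0 ≤ Ψ x := fun x => mul_nonneg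
    (add_nonneg (Real.rpow_nonneg (abs_nonneg _) _) (Real.rpow_nonneg (abs_nonneg _) _))
    (hw0 x)
  have hΦ0 : ∀ n x, 0 ≤ Φ n x := fun n x => mul_nonneg
    (add_nonneg (Real.rpow_nonneg (abs_nonneg _) _) (Real.rpow_nonneg (abs_nonneg _) _))
    (hw0 x)
  have hF0 : ∀ n x, 0 ≤ F n x := fun n x => mul_nonneg
    (mul_nonneg (Real.rpow_nonneg (abs_nonneg _) _) (Real.rpow_nonneg (abs_nonneg _) _))
    (hw0 x)
  have hG0 : ∀ n x, 0 ≤ G n x := fun n x => mul_nonneg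
    (mul_nonneg (Real.rpow_nonneg (abs_nonneg _) _) (Real.rpow_nonneg (abs_nonneg _) _))
    (hw0 x)
  have hH0 : ∀ x, 0 ≤ H x := fun x => mul_nonneg
    (mul_nonneg (Real.rpow_nonneg (abs_nonneg _) _) (Real.rpow_nonneg (abs_nonneg _) _))
    (hw0 x)
  -- measurability
  have hΨm : Measurable Ψ :=
    ((hu₀.abs.pow_const _).add (hv₀.abs.pow_const _)).mul hw
  have hΦm : ∀ n, Measurable (Φ n) := fun n =>
    ((((hu n).sub hu₀).abs.pow_const _).add (((hv n).sub hv₀).abs.pow_const _)).mul hw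
  have hFm : ∀ n, Measurable (F n) := fun n =>
    (((hu n).abs.pow_const _).mul ((hv n).abs.pow_const _)).mul hw
  have hGm : ∀ n, Measurable (G n) := fun n =>
    ((((hu n).sub hu₀).abs.pow_const _).mul (((hv n).sub hv₀).abs.pow_const _)).mul hw
  have hHm : Measurable H :=
    ((hu₀.abs.pow_const _).mul (hv₀.abs.pow_const _)).mul hw
  have hgm : ∀ n, Measurable (g n) := fun n => ((hFm n).sub (hGm n)).sub hHm
  -- helper: convergence of |·|^γ
  have habs_rpow : ∀ {c : ℕ → ℝ} {c₀ : ℝ} (γ : ℝ), 0 ≤ γ →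
      Tendsto c atTop (nhds c₀) →
      Tendsto (fun n => |c n| ^ γ) atTop (nhds (|c₀| ^ γ)) := by
    intro c c₀ γ hγ hc
    exact (Real.continuousAt_rpow_const _ γ (Or.inr hγ)).tendsto.comp hc.abs
  -- a.e. convergence of Φ to 0 and g to 0
  have haeuv := haeu.and haev
  have hΦtend : ∀ᵐ x ∂μ, Tendsto (fun n => Φ n x) atTop (nhds 0) := by
    filter_upwards [haeuv] with x hx
    have h1 : Tendsto (fun n => u n x - u₀ x) atTop (nhds 0) := by
      simpa using hx.1.sub (tendsto_const_nhds (x := u₀ x))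
    have h2 : Tendsto (fun n => v n x - v₀ x) atTop (nhds 0) := by
      simpa using hx.2.sub (tendsto_const_nhds (x := v₀ x))
    have h1' := habs_rpow (α + β) hp0.le h1
    have h2' := habs_rpow (α + β) hp0.le h2
    rw [abs_zero, Real.zero_rpow hp0.ne'] at h1' h2'
    have := (h1'.add h2').mul_const (w x)
    simpa using this
  have hgtend : ∀ᵐ x ∂μ, Tendsto (fun n => g n x) atTop (nhds 0) := by
    filter_upwards [haeuv] with x hx
    have h1 : Tendsto (fun n => u n x - u₀ x) atTop (nhds 0) := by
      simpa using hx.1.sub (tendsto_const_nhds (x := u₀ x))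
    have h2 : Tendsto (fun n => v n x - v₀ x) atTop (nhds 0) := by
      simpa using hx.2.sub (tendsto_const_nhds (x := v₀ x))
    have hFt : Tendsto (fun n => F n x) atTop (nhds (H x)) :=
      ((habs_rpow α hα0.le hx.1).mul (habs_rpow β hβ0.le hx.2)).mul_const (w x)
    have h1' := habs_rpow α hα0.le h1
    have h2' := habs_rpow β hβ0.le h2
    rw [abs_zero, Real.zero_rpow hα0.ne'] at h1'
    rw [abs_zero, Real.zero_rpow hβ0.ne'] at h2'
    have hGt : Tendsto (fun n => G n x) atTop (nhds 0) := by
      have := (h1'.mul h2').mul_const (w x)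
      simpa using this
    have := (hFt.sub hGt).sub (tendsto_const_nhds (x := H x))
    simpa using this
  -- lintegral bound for Ψ via Fatou
  have hΨlint : ∫⁻ x, ENNReal.ofReal (Ψ x) ∂μ ≤ M := by
    have hmeas : ∀ n : ℕ, Measurable (fun x =>
        ENNReal.ofReal ((|u n x| ^ (α + β) + |v n x| ^ (α + β)) * w x)) := fun n =>
      ((((hu n).abs.pow_const _).add ((hv n).abs.pow_const _)).mul hw).ennreal_ofReal
    have htend : ∀ᵐ x ∂μ, Tendsto
        (fun n => ENNReal.ofReal ((|u n x| ^ (α + β) + |v n x| ^ (α + β)) * w x))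
        atTop (nhds (ENNReal.ofReal (Ψ x))) := by
      filter_upwards [haeuv] with x hx
      exact ENNReal.tendsto_ofReal
        (((habs_rpow (α + β) hp0.le hx.1).add (habs_rpow (α + β) hp0.le hx.2)).mul_const (w x))
    calc ∫⁻ x, ENNReal.ofReal (Ψ x) ∂μ
        = ∫⁻ x, liminf (fun n =>
            ENNReal.ofReal ((|u n x| ^ (α + β) + |v n x| ^ (α + β)) * w x)) atTop ∂μ := by
          refine lintegral_congr_ae ?_
          filter_upwards [htend] with x hx
          exact (hx.liminf_eq).symm
      _ ≤ liminf (fun n => ∫⁻ x,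
            ENNReal.ofReal ((|u n x| ^ (α + β) + |v n x| ^ (α + β)) * w x) ∂μ) atTop :=
          lintegral_liminf_le hmeas
      _ ≤ liminf (fun _ : ℕ => M) atTop :=
          liminf_le_liminf (Eventually.of_forall hbdd)
      _ = M := liminf_const M
  -- integrability helper
  have int_of_lint : ∀ f : X → ℝ, Measurable f → (∀ x, 0 ≤ f x) →
      (∫⁻ x, ENNReal.ofReal (f x) ∂μ) < ⊤ → Integrable f μ := by
    intro f hf h0 hfin
    exact ⟨hf.aestronglyMeasurable,
      (hasFiniteIntegral_iff_ofReal (Eventually.of_forall h0)).2 hfin⟩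
  have hΨint : Integrable Ψ μ :=
    int_of_lint _ hΨm hΨ0 (lt_of_le_of_lt hΨlint hM)
  -- pointwise bound F ≤ bound_n, G ≤ Φ, H ≤ Ψ
  have hFle : ∀ n x, F n x ≤ (|u n x| ^ (α + β) + |v n x| ^ (α + β)) * w x := fun n x =>
    mul_le_mul_of_nonneg_right (young_simple hα0 hβ0 (abs_nonneg _) (abs_nonneg _)) (hw0 x)
  have hGle : ∀ n x, G n x ≤ Φ n x := fun n x =>
    mul_le_mul_of_nonneg_right (young_simple hα0 hβ0 (abs_nonneg _) (abs_nonneg _)) (hw0 x)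
  have hHle : ∀ x, H x ≤ Ψ x := fun x =>
    mul_le_mul_of_nonneg_right (young_simple hα0 hβ0 (abs_nonneg _) (abs_nonneg _)) (hw0 x)
  -- lintegral bound for Φ
  set K₀ : ENNReal := ENNReal.ofReal (2 ^ (α + β)) * (M + M) with hK₀def
  have hK₀fin : K₀ < ⊤ := by
    rw [hK₀def]
    exact ENNReal.mul_lt_top ENNReal.ofReal_lt_top (ENNReal.add_lt_top.2 ⟨hM, hM⟩)
  have hΦle : ∀ n x, Φ n x ≤ 2 ^ (α + β) *
      (((|u n x| ^ (α + β) + |v n x| ^ (α + β)) * w x) + Ψ x) := by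
    intro n x
    have h1 : |u n x - u₀ x| ^ (α + β) ≤
        2 ^ (α + β) * (|u n x| ^ (α + β) + |u₀ x| ^ (α + β)) := by
      calc |u n x - u₀ x| ^ (α + β) ≤ (|u n x| + |u₀ x|) ^ (α + β) :=
            Real.rpow_le_rpow (abs_nonneg _) (abs_sub _ _) hp0.le
        _ ≤ _ := two_rpow hp0.le (abs_nonneg _) (abs_nonneg _)
    have h2 : |v n x - v₀ x| ^ (α + β) ≤
        2 ^ (α + β) * (|v n x| ^ (α + β) + |v₀ x| ^ (α + β)) := by
      calc |v n x - v₀ x| ^ (α + β) ≤ (|v n x| + |v₀ x|) ^ (α + β) :=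
            Real.rpow_le_rpow (abs_nonneg _) (abs_sub _ _) hp0.le
        _ ≤ _ := two_rpow hp0.le (abs_nonneg _) (abs_nonneg _)
    have hw' := hw0 x
    have expand : 2 ^ (α + β) * (((|u n x| ^ (α + β) + |v n x| ^ (α + β)) * w x) + Ψ x) =
        (2 ^ (α + β) * (|u n x| ^ (α + β) + |u₀ x| ^ (α + β))
          + 2 ^ (α + β) * (|v n x| ^ (α + β) + |v₀ x| ^ (α + β))) * w x := by
      rw [hΨdef]; ring
    rw [hΦdef, expand]
    exact mul_le_mul_of_nonneg_right (by linarith) hw'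
  have hΦlint : ∀ n, ∫⁻ x, ENNReal.ofReal (Φ n x) ∂μ ≤ K₀ := by
    intro n
    have h2p : (0:ℝ) ≤ 2 ^ (α + β) := Real.rpow_nonneg (by norm_num) _
    calc ∫⁻ x, ENNReal.ofReal (Φ n x) ∂μ
        ≤ ∫⁻ x, ENNReal.ofReal (2 ^ (α + β) *
            (((|u n x| ^ (α + β) + |v n x| ^ (α + β)) * w x) + Ψ x)) ∂μ :=
          lintegral_mono fun x => ENNReal.ofReal_le_ofReal (hΦle n x)
      _ = ∫⁻ x, ENNReal.ofReal (2 ^ (α + β)) *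
            (ENNReal.ofReal ((|u n x| ^ (α + β) + |v n x| ^ (α + β)) * w x)
              + ENNReal.ofReal (Ψ x)) ∂μ := by
          refine lintegral_congr fun x => ?_
          rw [ENNReal.ofReal_mul h2p, ENNReal.ofReal_add
            (mul_nonneg (add_nonneg (Real.rpow_nonneg (abs_nonneg _) _)
              (Real.rpow_nonneg (abs_nonneg _) _)) (hw0 x)) (hΨ0 x)]
      _ = ENNReal.ofReal (2 ^ (α + β)) *
            (∫⁻ x, (ENNReal.ofReal ((|u n x| ^ (α + β) + |v n x| ^ (α + β)) * w x)
              + ENNReal.ofReal (Ψ x)) ∂μ) := by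
          rw [lintegral_const_mul]
          exact (((((hu n).abs.pow_const _).add ((hv n).abs.pow_const _)).mul hw).ennreal_ofReal).add
            (hΨm.ennreal_ofReal)
      _ = ENNReal.ofReal (2 ^ (α + β)) *
            ((∫⁻ x, ENNReal.ofReal ((|u n x| ^ (α + β) + |v n x| ^ (α + β)) * w x) ∂μ)
              + ∫⁻ x, ENNReal.ofReal (Ψ x) ∂μ) := by
          rw [lintegral_add_left]
          exact ((((hu n).abs.pow_const _).add ((hv n).abs.pow_const _)).mul hw).ennreal_ofReal
      _ ≤ ENNReal.ofReal (2 ^ (α + β)) * (M + M) :=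
          mul_le_mul' le_rfl (add_le_add (hbdd n) hΨlint)
  -- integrability
  have hFint : ∀ n, Integrable (F n) μ := by
    intro n
    refine int_of_lint _ (hFm n) (hF0 n) (lt_of_le_of_lt ?_ hM)
    calc ∫⁻ x, ENNReal.ofReal (F n x) ∂μ
        ≤ ∫⁻ x, ENNReal.ofReal ((|u n x| ^ (α + β) + |v n x| ^ (α + β)) * w x) ∂μ :=
          lintegral_mono fun x => ENNReal.ofReal_le_ofReal (hFle n x)
      _ ≤ M := hbdd n
  have hΦint : ∀ n, Integrable (Φ n) μ := fun n =>
    int_of_lint _ (hΦm n) (hΦ0 n) (lt_of_le_of_lt (hΦlint n) hK₀fin)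
  have hGint : ∀ n, Integrable (G n) μ := by
    intro n
    refine int_of_lint _ (hGm n) (hG0 n) (lt_of_le_of_lt ?_ hK₀fin)
    calc ∫⁻ x, ENNReal.ofReal (G n x) ∂μ
        ≤ ∫⁻ x, ENNReal.ofReal (Φ n x) ∂μ :=
          lintegral_mono fun x => ENNReal.ofReal_le_ofReal (hGle n x)
      _ ≤ K₀ := hΦlint n
  have hHint : Integrable H μ := by
    refine int_of_lint _ hHm hH0 (lt_of_le_of_lt ?_ hM)
    calc ∫⁻ x, ENNReal.ofReal (H x) ∂μ
        ≤ ∫⁻ x, ENNReal.ofReal (Ψ x) ∂μ :=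
          lintegral_mono fun x => ENNReal.ofReal_le_ofReal (hHle x)
      _ ≤ M := hΨlint
  have hgint : ∀ n, Integrable (g n) μ := fun n => ((hFint n).sub (hGint n)).sub hHint
  -- real integral bound for Φ
  set K : ℝ := K₀.toReal with hKdef
  have hK0 : 0 ≤ K := ENNReal.toReal_nonneg
  have hΦreal : ∀ n, ∫ x, Φ n x ∂μ ≤ K := by
    intro n
    rw [integral_eq_lintegral_of_nonneg_ae (Eventually.of_forall (hΦ0 n))
      (hΦm n).aestronglyMeasurable]
    exact ENNReal.toReal_mono hK₀fin.ne (hΦlint n)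
  -- main: ∫ |g n| → 0
  have hmain : Tendsto (fun n => ∫ x, |g n x| ∂μ) atTop (nhds 0) := by
    rw [NormedAddCommGroup.tendsto_nhds_zero]
    intro δ hδ
    set ε : ℝ := δ / (2 * (K + 1)) with hεdef
    have hε : 0 < ε := by positivity
    obtain ⟨C, hC0, hC⟩ := key_ineq hα hβ hε
    have hmaster : ∀ n x, |g n x| ≤ ε * Φ n x + C * Ψ x := by
      intro n x
      have hfac : g n x = (|u n x| ^ α * |v n x| ^ β
          - |u n x - u₀ x| ^ α * |v n x - v₀ x| ^ β
          - |u₀ x| ^ α * |v₀ x| ^ β) * w x := by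
        rw [hgdef]; simp only [hFdef, hGdef, hHdef]; ring
      have : |g n x| = |(|u n x| ^ α * |v n x| ^ β
          - |u n x - u₀ x| ^ α * |v n x - v₀ x| ^ β
          - |u₀ x| ^ α * |v₀ x| ^ β)| * w x := by
        rw [hfac, abs_mul, abs_of_nonneg (hw0 x)]
      rw [this]
      have hkey := hC (u n x) (u₀ x) (v n x) (v₀ x)
      have := mul_le_mul_of_nonneg_right hkey (hw0 x)
      calc |(|u n x| ^ α * |v n x| ^ β
          - |u n x - u₀ x| ^ α * |v n x - v₀ x| ^ β
          - |u₀ x| ^ α * |v₀ x| ^ β)| * w x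
          ≤ (ε * (|u n x - u₀ x| ^ (α + β) + |v n x - v₀ x| ^ (α + β))
            + C * (|u₀ x| ^ (α + β) + |v₀ x| ^ (α + β))) * w x := this
        _ = ε * Φ n x + C * Ψ x := by rw [hΦdef, hΨdef]; ring
    set W : ℕ → X → ℝ := fun n x => max (|g n x| - ε * Φ n x) 0 with hWdef
    have hW0 : ∀ n x, 0 ≤ W n x := fun n x => le_max_right _ _
    have hWle : ∀ n x, W n x ≤ C * Ψ x := by
      intro n x
      apply max_le
      · linarith [hmaster n x, mul_nonneg hε.le (hΦ0 n x)]
      · exact mul_nonneg hC0 (hΨ0 x)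
    have hWm : ∀ n, Measurable (W n) := fun n =>
      ((hgm n).abs.sub (measurable_const.mul (hΦm n))).max measurable_const
    have hWtend : ∀ᵐ x ∂μ, Tendsto (fun n => W n x) atTop (nhds 0) := by
      filter_upwards [hgtend, hΦtend] with x h1 h2
      have : Tendsto (fun n => |g n x| - ε * Φ n x) atTop (nhds 0) := by
        have := h1.abs.sub ((h2.const_mul ε))
        simpa using this
      have := this.max (tendsto_const_nhds (x := (0:ℝ)))
      simpa using this
    have hWint : ∀ n, Integrable (W n) μ := by
      intro n
      refine (hΨint.const_mul C).mono' (hWm n).aestronglyMeasurable ?_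
      filter_upwards with x
      rw [Real.norm_eq_abs, abs_of_nonneg (hW0 n x)]
      exact hWle n x
    have hWlim : Tendsto (fun n => ∫ x, W n x ∂μ) atTop (nhds 0) := by
      have := tendsto_integral_of_dominated_convergence (fun x => C * Ψ x)
        (fun n => (hWm n).aestronglyMeasurable) (hΨint.const_mul C)
        (fun n => by
          filter_upwards with x
          rw [Real.norm_eq_abs, abs_of_nonneg (hW0 n x)]
          exact hWle n x)
        hWtend
      simpa using this
    have hev : ∀ᶠ n in atTop, ∫ x, W n x ∂μ < δ / 2 :=
      (tendsto_order.1 hWlim).2 (δ / 2) (by positivity)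
    filter_upwards [hev] with n hn
    have hle1 : ∫ x, |g n x| ∂μ ≤ ∫ x, (W n x + ε * Φ n x) ∂μ := by
      apply integral_mono (hgint n).abs ((hWint n).add ((hΦint n).const_mul ε))
      intro x
      show |g n x| ≤ W n x + ε * Φ n x
      have h2 : |g n x| - ε * Φ n x ≤ W n x := le_max_left _ _
      linarith
    have hle2 : ∫ x, (W n x + ε * Φ n x) ∂μ = ∫ x, W n x ∂μ + ε * ∫ x, Φ n x ∂μ := by
      rw [integral_add (hWint n) ((hΦint n).const_mul ε), MeasureTheory.integral_const_mul]
    have hεK : ε * ∫ x, Φ n x ∂μ ≤ δ / 2 := by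
      have h1 : ε * ∫ x, Φ n x ∂μ ≤ ε * K := mul_le_mul_of_nonneg_left (hΦreal n) hε.le
      have h2 : ε * (K + 1) = δ / 2 := by
        rw [hεdef]; field_simp
      nlinarith
    have hnonneg : 0 ≤ ∫ x, |g n x| ∂μ :=
      integral_nonneg fun x => abs_nonneg _
    rw [Real.norm_eq_abs, abs_of_nonneg hnonneg]
    linarith
  -- conclude
  have hgto0 : Tendsto (fun n => ∫ x, g n x ∂μ) atTop (nhds 0) := by
    apply squeeze_zero_norm _ hmain
    intro n
    calc ‖∫ x, g n x ∂μ‖ ≤ ∫ x, ‖g n x‖ ∂μ := norm_integral_le_integral_norm _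
      _ = ∫ x, |g n x| ∂μ := by simp only [Real.norm_eq_abs]
  have heq : ∀ n, ∫ x,
      (|u n x| ^ α * |v n x| ^ β - |u n x - u₀ x| ^ α * |v n x - v₀ x| ^ β) * w x ∂μ
      = (∫ x, H x ∂μ) + ∫ x, g n x ∂μ := by
    intro n
    have h1 : ∀ x, (|u n x| ^ α * |v n x| ^ β
        - |u n x - u₀ x| ^ α * |v n x - v₀ x| ^ β) * w x = F n x - G n x := by
      intro x; simp only [hFdef, hGdef]; ring
    have h2 : ∫ x, g n x ∂μ = (∫ x, F n x ∂μ) - (∫ x, G n x ∂μ) - ∫ x, H x ∂μ := by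
      simp only [hgdef]
      rw [integral_sub (show Integrable (fun x => F n x - G n x) μ from
        (hFint n).sub (hGint n)) hHint, integral_sub (hFint n) (hGint n)]
    simp only [h1]
    rw [integral_sub (hFint n) (hGint n)]
    linarith
  have : Tendsto (fun n => (∫ x, H x ∂μ) + ∫ x, g n x ∂μ) atTop
      (nhds ((∫ x, H x ∂μ) + 0)) := tendsto_const_nhds.add hgto0
  rw [add_zero] at this
  have hfun : (fun n => ∫ x,
      (|u n x| ^ α * |v n x| ^ β - |u n x - u₀ x| ^ α * |v n x - v₀ x| ^ β) * w x ∂μ)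
      = fun n => (∫ x, H x ∂μ) + ∫ x, g n x ∂μ := funext heq
  rw [hfun]
  exact this


end BL16

open BL16 in
/-- Lemma 4.6: Brezis–Lieb type result for the coupling term `|u|^α |v|^β`. -/
theorem stmt_16 (N : ℕ) (hN : 3 ≤ N) (s₂ α β : ℝ)
    (hs₂0 : 0 ≤ s₂) (hs₂2 : s₂ < 2) (hα : 1 < α) (hβ : 1 < β)
    (hαβ : α + β = 2 * ((N : ℝ) - s₂) / ((N : ℝ) - 2))
    (u v : ℕ → EuclideanSpace ℝ (Fin N) → ℝ)
    (hu : ∀ n, Measurable (u n)) (hv : ∀ n, Measurable (v n))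
    (u₀ v₀ : EuclideanSpace ℝ (Fin N) → ℝ)
    (hbdd : (⨆ n, ∫⁻ x, ENNReal.ofReal
        ((|u n x| ^ (2 * ((N : ℝ) - s₂) / ((N : ℝ) - 2))
          + |v n x| ^ (2 * ((N : ℝ) - s₂) / ((N : ℝ) - 2))) * ‖x‖ ^ (-s₂))) < ⊤)
    (haeu : ∀ᵐ (x : EuclideanSpace ℝ (Fin N)) ∂volume,
      Tendsto (fun n => u n x) atTop (nhds (u₀ x)))
    (haev : ∀ᵐ (x : EuclideanSpace ℝ (Fin N)) ∂volume,
      Tendsto (fun n => v n x) atTop (nhds (v₀ x))) :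
    Tendsto (fun n => ∫ x,
        (|u n x| ^ α * |v n x| ^ β - |u n x - u₀ x| ^ α * |v n x - v₀ x| ^ β) * ‖x‖ ^ (-s₂))
      atTop (nhds (∫ x, |u₀ x| ^ α * |v₀ x| ^ β * ‖x‖ ^ (-s₂))) := by
  simp only [← hαβ] at hbdd
  set w : EuclideanSpace ℝ (Fin N) → ℝ := fun x => ‖x‖ ^ (-s₂) with hwdef
  have hw : Measurable w := measurable_norm.pow_const (-s₂)
  have hw0 : ∀ x, 0 ≤ w x := fun x => Real.rpow_nonneg (norm_nonneg x) _
  set M : ENNReal := ⨆ n, ∫⁻ x, ENNReal.ofReal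
      ((|u n x| ^ (α + β) + |v n x| ^ (α + β)) * w x) with hMdef
  have hM : M < ⊤ := hbdd
  have hbdd' : ∀ n, ∫⁻ x, ENNReal.ofReal
      ((|u n x| ^ (α + β) + |v n x| ^ (α + β)) * w x) ≤ M := fun n =>
    le_iSup (fun n => ∫⁻ x, ENNReal.ofReal
      ((|u n x| ^ (α + β) + |v n x| ^ (α + β)) * w x)) n
  have hu0m : AEMeasurable u₀ volume :=
    aemeasurable_of_tendsto_metrizable_ae atTop (fun n => (hu n).aemeasurable) haeu
  have hv0m : AEMeasurable v₀ volume :=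
    aemeasurable_of_tendsto_metrizable_ae atTop (fun n => (hv n).aemeasurable) haev
  set u₁ := hu0m.mk u₀ with hu₁def
  set v₁ := hv0m.mk v₀ with hv₁def
  have hu₁m : Measurable u₁ := hu0m.measurable_mk
  have hv₁m : Measurable v₁ := hv0m.measurable_mk
  have hue : u₀ =ᵐ[volume] u₁ := hu0m.ae_eq_mk
  have hve : v₀ =ᵐ[volume] v₁ := hv0m.ae_eq_mk
  have haeu' : ∀ᵐ x ∂(volume : Measure (EuclideanSpace ℝ (Fin N))),
      Tendsto (fun n => u n x) atTop (nhds (u₁ x)) := by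
    filter_upwards [haeu, hue] with x h he
    rwa [he] at h
  have haev' : ∀ᵐ x ∂(volume : Measure (EuclideanSpace ℝ (Fin N))),
      Tendsto (fun n => v n x) atTop (nhds (v₁ x)) := by
    filter_upwards [haev, hve] with x h he
    rwa [he] at h
  have key := main_aux (volume : Measure (EuclideanSpace ℝ (Fin N))) α β hα hβ
    w hw hw0 u v hu hv u₁ v₁ hu₁m hv₁m M hM hbdd' haeu' haev'
  have hfun : (fun n => ∫ x,
      (|u n x| ^ α * |v n x| ^ β - |u n x - u₀ x| ^ α * |v n x - v₀ x| ^ β) * w x)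
      = (fun n => ∫ x,
      (|u n x| ^ α * |v n x| ^ β - |u n x - u₁ x| ^ α * |v n x - v₁ x| ^ β) * w x) := by
    funext n
    refine integral_congr_ae ?_
    filter_upwards [hue, hve] with x h1 h2
    rw [h1, h2]
  have hlim : (∫ x, |u₀ x| ^ α * |v₀ x| ^ β * w x)
      = ∫ x, |u₁ x| ^ α * |v₁ x| ^ β * w x := by
    refine integral_congr_ae ?_
    filter_upwards [hue, hve] with x h1 h2
    rw [h1, h2]
  rw [hfun, hlim]
  exact key
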